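/- Let E be a real normed vector space, I a finite index set, f : E → ℝ and g_i : E → ℝ (i ∈ I) functions differentiable at a point p ∈ E, λ : I → ℝ, and μ > 0. Then the augmented Lagrangian L_A(·, λ, μ) = f + Σ_{i∈I} ψ(g_i(·), λ_i, μ) is differentiable at p, and its Fréchet derivative satisfies D L_A(p) = D f(p) − Σ_{i∈I} max(λ_i − g_i(p)/μ, 0) · D g_i(p); i.e., the gradient of the augmented Lagrangian equals the gradient of the ordinary Lagrangian f − Σ_i λ_i' g_i evaluated with the updated multipliers λ_i' = max(λ_i − g_i(p)/μ, 0) of the multiplier update rule. -/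

import Mathlib

/-- The augmented Lagrangian penalty function:
`ψ(γ, σ, μ) = -σγ + γ²/(2μ)` if `γ - μσ ≤ 0`, and `-(μ/2)σ²` otherwise. -/
noncomputable def psi (γ σ μ : ℝ) : ℝ :=
  if γ - μ * σ ≤ 0 then -σ * γ + γ ^ 2 / (2 * μ) else -(μ / 2) * σ ^ 2

lemma minsq_hasDerivAt (x : ℝ) :
    HasDerivAt (fun y : ℝ => (min y 0) ^ 2) (2 * min x 0) x := by
  rcases lt_trichotomy x 0 with hx | hx | hx
  · have h : HasDerivAt (fun y : ℝ => y ^ 2) (2 * x) x := by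
      simpa using (hasDerivAt_pow 2 x)
    have hev : (fun y : ℝ => y ^ 2) =ᶠ[nhds x] fun y => (min y 0) ^ 2 := by
      filter_upwards [eventually_lt_nhds hx] with y hy
      rw [min_eq_left hy.le]
    simpa [min_eq_left hx.le] using h.congr_of_eventuallyEq hev.symm
  · subst hx
    rw [hasDerivAt_iff_isLittleO]
    simp only [min_self, ne_eq, OfNat.ofNat_ne_zero, not_false_eq_true, zero_pow, sub_zero,
      mul_zero, smul_zero]
    rw [Asymptotics.isLittleO_iff]
    intro c hc
    filter_upwards [Metric.ball_mem_nhds (0:ℝ) hc] with y hy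
    simp only [Metric.mem_ball, dist_zero_right, Real.norm_eq_abs] at hy ⊢
    have h1 : |min y 0 ^ 2| ≤ |y| * |y| := by
      rw [abs_of_nonneg (sq_nonneg _), sq]
      have : |min y 0| ≤ |y| := by
        rcases le_or_gt y 0 with h | h
        · simp [min_eq_left h]
        · simp [min_eq_right h.le, abs_nonneg]
      calc min y 0 * min y 0 ≤ |min y 0| * |min y 0| := by
            rw [← abs_mul, ← sq, abs_of_nonneg (sq_nonneg _), sq]
          _ ≤ |y| * |y| := mul_le_mul this this (abs_nonneg _) (abs_nonneg _)
    calc |min y 0 ^ 2| ≤ |y| * |y| := h1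
      _ ≤ c * |y| := mul_le_mul_of_nonneg_right hy.le (abs_nonneg _)
  · have hev : (fun _ : ℝ => (0:ℝ)) =ᶠ[nhds x] fun y => (min y 0) ^ 2 := by
      filter_upwards [eventually_gt_nhds hx] with y hy
      rw [min_eq_right hy.le]
      norm_num
    simpa [min_eq_right hx.le] using
      (hasDerivAt_const x (0:ℝ)).congr_of_eventuallyEq hev.symm

lemma psi_eq (γ σ μ : ℝ) (hμ : 0 < μ) :
    psi γ σ μ = (min (γ - μ * σ) 0) ^ 2 / (2 * μ) - μ * σ ^ 2 / 2 := by
  unfold psi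
  split_ifs with h
  · rw [min_eq_left h]
    field_simp
    ring
  · rw [min_eq_right (by linarith)]
    norm_num
    ring

lemma psi_hasDerivAt (σ μ : ℝ) (hμ : 0 < μ) (γ : ℝ) :
    HasDerivAt (fun y => psi y σ μ) (min (γ - μ * σ) 0 / μ) γ := by
  have h1 : HasDerivAt (fun y : ℝ => (min (y - μ * σ) 0) ^ 2 / (2 * μ) - μ * σ ^ 2 / 2)
      (min (γ - μ * σ) 0 / μ) γ := by
    have h2 : HasDerivAt (fun y : ℝ => y - μ * σ) 1 γ :=
      (hasDerivAt_id γ).sub_const _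
    have h3 := (minsq_hasDerivAt (γ - μ * σ)).comp γ h2
    have h4 := (h3.div_const (2 * μ)).sub_const (μ * σ ^ 2 / 2)
    convert h4 using 1
    · rfl
    · rfl
    · rfl
    field_simp
  exact h1.congr_of_eventuallyEq (Filter.Eventually.of_forall fun y => psi_eq y σ μ hμ)

/-- Let `E` be a real normed vector space, `I` a finite index set, `f` and the `g i`
differentiable at `p ∈ E`, `lam : I → ℝ`, and `μ > 0`. Then the augmented Lagrangian
`L_A(·, λ, μ) = f + ∑ i, ψ(g i ·, λ i, μ)` is differentiable at `p` with Fréchet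
derivative `D f(p) - ∑ i, max(λ i - g i p / μ, 0) • D (g i)(p)`, i.e. the derivative of
the ordinary Lagrangian evaluated with the updated multipliers
`λ i' = max(λ i - g i p / μ, 0)` of the multiplier update rule. -/
theorem augLagrangian_hasFDerivAt {E : Type*} [NormedAddCommGroup E] [NormedSpace ℝ E]
    {I : Type*} [Fintype I] (f : E → ℝ) (g : I → E → ℝ) (p : E)
    (f' : E →L[ℝ] ℝ) (g' : I → E →L[ℝ] ℝ)
    (hf : HasFDerivAt f f' p) (hg : ∀ i, HasFDerivAt (g i) (g' i) p)
    (lam : I → ℝ) (μ : ℝ) (hμ : 0 < μ) :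
    HasFDerivAt (fun q : E => f q + ∑ i, psi (g i q) (lam i) μ)
      (f' - ∑ i, (max (lam i - g i p / μ) 0) • g' i) p := by
  have hterm : ∀ i, HasFDerivAt (fun q => psi (g i q) (lam i) μ)
      ((min (g i p - μ * lam i) 0 / μ) • g' i) p := fun i =>
    (psi_hasDerivAt (lam i) μ hμ (g i p)).comp_hasFDerivAt p (hg i)
  have hsum : HasFDerivAt (fun q : E => ∑ i, psi (g i q) (lam i) μ)
      (∑ i, (min (g i p - μ * lam i) 0 / μ) • g' i) p :=
    HasFDerivAt.fun_sum fun i _ => hterm i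
  have h := hf.add hsum
  convert h using 1
  · rfl
  · rfl
  · rfl
  rw [sub_eq_add_neg, ← Finset.sum_neg_distrib]
  congr 1
  apply Finset.sum_congr rfl
  intro i _
  refine (neg_smul _ _).symm.trans ?_
  congr 1
  rcases le_total (g i p - μ * lam i) 0 with h | h
  · have h1 : g i p / μ ≤ lam i := (div_le_iff₀ hμ).mpr (by linarith)
    rw [min_eq_left h, max_eq_left (by linarith)]
    field_simp
    ring
  · have h1 : lam i ≤ g i p / μ := (le_div_iff₀ hμ).mpr (by linarith)
    rw [min_eq_right h, max_eq_right (by linarith)]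
    simp
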